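/- Let (X, dist) be a metric space, m ≥ 1, k ≥ 1, ℓ ≥ 1 integers, and ε ≥ 0. For j ∈ {1,2}, let p_j, q_j : Fin n_j → X be families of points with a common coloring g_j : Fin n_j → Fin ℓ, and suppose that for every c : Fin k → X and every nonempty set 𝐊 of color-constraint matrices with respect to g_j, |cost_{m,𝐊}(p_j, g_j, c) − cost_{m,𝐊}(q_j, g_j, c)| ≤ ε · cost_{m,𝐊}(p_j, g_j, c) (i.e., q_j is a (k, ε)-color coreset for p_j). Let p, q : Fin (n₁+n₂) → X and g : Fin (n₁+n₂) → Fin ℓ be the concatenations (Fin.append) of p₁, p₂, of q₁, q₂, and of g₁, g₂, respectively. Then for every c : Fin k → X and every nonempty set 𝐊 of color-constraint matrices with respect to g, |cost_{m,𝐊}(p, g, c) − cost_{m,𝐊}(q, g, c)| ≤ ε · cost_{m,𝐊}(p, g, c); i.e., color coresets are mergeable. -/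

import Mathlib

open Finset
lemma card_filter_append' {n₁ n₂ : ℕ} (P : Fin (n₁+n₂) → Prop) [DecidablePred P] :
    (univ.filter P).card =
      (univ.filter fun t : Fin n₁ => P (Fin.castAdd n₂ t)).card +
      (univ.filter fun t : Fin n₂ => P (Fin.natAdd n₁ t)).card := by
  simp only [Finset.card_filter]
  rw [Fin.sum_univ_add]

lemma card_filter_succ' {n : ℕ} (P : Fin (n+1) → Prop) [DecidablePred P] :
    (univ.filter P).card =
      (univ.filter fun t : Fin n => P t.castSucc).card + (if P (Fin.last n) then 1 else 0) := by
  simp only [Finset.card_filter]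
  rw [Fin.sum_univ_castSucc]

lemma partition_card' {n k : ℕ} (β : Fin n → Fin k) (Q : Fin n → Prop) [DecidablePred Q] :
    ∑ i, (univ.filter fun t => β t = i ∧ Q t).card = (univ.filter Q).card := by
  simp only [Finset.card_filter]
  rw [Finset.sum_comm]
  refine Finset.sum_congr rfl fun t _ => ?_
  by_cases h : Q t <;> simp [h]

/-- `K` is a color-constraint matrix with respect to the coloring `g`. -/
def IsColorConstraint {n k l : ℕ} (g : Fin n → Fin l) (K : Fin k → Fin l → ℕ) : Prop :=
  ∀ j, ∑ i, K i j = (Finset.univ.filter fun t => g t = j).card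

/-- An assignment `α` satisfies the color-constraint matrix `K` if cluster `i`
receives exactly `K i j` points of color `j`. -/
def satisfiesColor {n k l : ℕ} (α : Fin n → Fin k) (g : Fin n → Fin l)
    (K : Fin k → Fin l → ℕ) : Prop :=
  ∀ i j, (Finset.univ.filter fun t => α t = i ∧ g t = j).card = K i j

/-- The `K`-constrained clustering cost for colored points. -/
noncomputable def colorCost {X : Type*} [MetricSpace X] {n k l : ℕ} (m : ℕ)
    (p : Fin n → X) (g : Fin n → Fin l) (c : Fin k → X)
    (K : Fin k → Fin l → ℕ) : ℝ :=
  sInf {x | ∃ α : Fin n → Fin k, satisfiesColor α g K ∧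
    x = ∑ t, dist (p t) (c (α t)) ^ m}

/-- The cost under a color constraint, i.e. a set `Ks` of color-constraint
matrices. -/
noncomputable def colorConstraintCost {X : Type*} [MetricSpace X] {n k l : ℕ} (m : ℕ)
    (p : Fin n → X) (g : Fin n → Fin l) (c : Fin k → X)
    (Ks : Set (Fin k → Fin l → ℕ)) : ℝ :=
  sInf {x | ∃ K ∈ Ks, x = colorCost m p g c K}

lemma exists_sat {k l : ℕ} : ∀ {n : ℕ} (g : Fin n → Fin l) (K : Fin k → Fin l → ℕ),
    IsColorConstraint g K → ∃ α : Fin n → Fin k, satisfiesColor α g K := by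
  intro n
  induction n with
  | zero =>
    intro g K hK
    refine ⟨Fin.elim0, fun i j => ?_⟩
    have h := hK j
    simp only [Finset.univ_eq_empty, Finset.filter_empty, Finset.card_empty] at h ⊢
    exact ((Finset.sum_eq_zero_iff.mp h) i (Finset.mem_univ i)).symm
  | succ n ih =>
    intro g K hK
    set j₀ := g (Fin.last n) with hj₀
    have hpos : 0 < ∑ i, K i j₀ := by
      rw [hK j₀]
      exact Finset.card_pos.mpr ⟨Fin.last n, by simp [hj₀]⟩
    obtain ⟨i₀, -, hi₀⟩ := Finset.exists_ne_zero_of_sum_ne_zero (by omega : ∑ i, K i j₀ ≠ 0)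
    set K' : Fin k → Fin l → ℕ := fun i j => if i = i₀ ∧ j = j₀ then K i j - 1 else K i j with hK'
    have hsum' : ∀ j, ∑ i, K' i j = (if j = j₀ then (∑ i, K i j) - 1 else ∑ i, K i j) := by
      intro j
      by_cases hj : j = j₀
      · subst hj
        rw [if_pos rfl]
        have key : ∀ i : Fin k, K' i j₀ + (if i = i₀ then 1 else 0) = K i j₀ := by
          intro i
          simp only [hK', and_true]
          by_cases hi : i = i₀
          · rw [if_pos hi, if_pos hi, hi]
            omega
          · rw [if_neg hi, if_neg hi]
            omega
        have h2 : ∑ i, (K' i j₀ + (if i = i₀ then 1 else 0)) = ∑ i, K i j₀ :=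
          Finset.sum_congr rfl fun i _ => key i
        have h3 : ∑ i : Fin k, (if i = i₀ then (1:ℕ) else 0) = 1 := by simp
        rw [Finset.sum_add_distrib, h3] at h2
        omega
      · simp only [hK', hj, and_false, if_false, if_neg hj]
    have hcc' : IsColorConstraint (fun t : Fin n => g t.castSucc) K' := by
      intro j
      show ∑ i, K' i j = (univ.filter fun t : Fin n => g t.castSucc = j).card
      have hcard := card_filter_succ' (fun t : Fin (n+1) => g t = j)
      rw [← hj₀] at hcard
      rw [hsum' j]
      by_cases hj : j = j₀
      · subst hj
        rw [if_pos rfl] at hcard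
        rw [if_pos rfl]
        have h3 := hK j₀
        omega
      · rw [if_neg (fun h => hj h.symm)] at hcard
        rw [if_neg hj]
        have h3 := hK j
        omega
    obtain ⟨α', hα'⟩ := ih _ K' hcc'
    refine ⟨Fin.snoc α' i₀, fun i j => ?_⟩
    have hcard := card_filter_succ'
      (fun t : Fin (n+1) => (Fin.snoc α' i₀ : Fin (n+1) → Fin k) t = i ∧ g t = j)
    simp only [Fin.snoc_castSucc, Fin.snoc_last] at hcard
    have hα'' : (univ.filter fun t : Fin n => α' t = i ∧ g t.castSucc = j).card = K' i j :=
      hα' i j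
    rw [hcard, hα'', ← hj₀]
    have hKpos : 1 ≤ K i₀ j₀ := by omega
    by_cases hij : i₀ = i ∧ j₀ = j
    · obtain ⟨hi, hj⟩ := hij
      subst hi; subst hj
      rw [if_pos (show i₀ = i₀ ∧ j₀ = j₀ from ⟨rfl, rfl⟩)]
      simp only [hK', if_pos (show i₀ = i₀ ∧ j₀ = j₀ from ⟨rfl, rfl⟩)]
      omega
    · rw [if_neg hij]
      simp only [hK']
      rw [if_neg (fun h : i = i₀ ∧ j = j₀ => hij ⟨h.1.symm, h.2.symm⟩)]
      omega

section
variable {X : Type*} [MetricSpace X] {n k l m : ℕ}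
  {p : Fin n → X} {g : Fin n → Fin l} {c : Fin k → X}

lemma colorCost_set_finite (K : Fin k → Fin l → ℕ) :
    {x | ∃ α : Fin n → Fin k, satisfiesColor α g K ∧
      x = ∑ t, dist (p t) (c (α t)) ^ m}.Finite :=
  Set.Finite.subset (Set.finite_range fun α : Fin n → Fin k => ∑ t, dist (p t) (c (α t)) ^ m)
    (fun _ ⟨α, _, hx⟩ => ⟨α, hx.symm⟩)

lemma colorCost_le {K : Fin k → Fin l → ℕ} {α : Fin n → Fin k} (hα : satisfiesColor α g K) :
    colorCost m p g c K ≤ ∑ t, dist (p t) (c (α t)) ^ m :=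
  csInf_le (colorCost_set_finite K).bddBelow ⟨α, hα, rfl⟩

lemma colorCost_attained {K : Fin k → Fin l → ℕ} (hK : IsColorConstraint g K) :
    ∃ α : Fin n → Fin k, satisfiesColor α g K ∧
      colorCost m p g c K = ∑ t, dist (p t) (c (α t)) ^ m := by
  have hne : {x | ∃ α : Fin n → Fin k, satisfiesColor α g K ∧
      x = ∑ t, dist (p t) (c (α t)) ^ m}.Nonempty := by
    obtain ⟨α, hα⟩ := exists_sat g K hK
    exact ⟨_, α, hα, rfl⟩
  exact Set.Nonempty.csInf_mem hne (colorCost_set_finite K)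

lemma colorCost_nonneg' {K : Fin k → Fin l → ℕ} (hK : IsColorConstraint g K) :
    0 ≤ colorCost m p g c K := by
  obtain ⟨α, -, h⟩ := colorCost_attained (p := p) (c := c) (m := m) hK
  rw [h]
  exact Finset.sum_nonneg fun t _ => pow_nonneg dist_nonneg m

lemma cCC_set_finite (Ks : Set (Fin k → Fin l → ℕ))
    (hall : ∀ K ∈ Ks, IsColorConstraint g K) :
    {x | ∃ K ∈ Ks, x = colorCost m p g c K}.Finite := by
  apply Set.Finite.subset
    (Set.finite_range fun α : Fin n → Fin k => ∑ t, dist (p t) (c (α t)) ^ m)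
  rintro x ⟨K, hK, rfl⟩
  obtain ⟨α, -, h⟩ := colorCost_attained (p := p) (c := c) (m := m) (hall K hK)
  exact ⟨α, h.symm⟩

lemma cCC_le {Ks : Set (Fin k → Fin l → ℕ)} (hall : ∀ K ∈ Ks, IsColorConstraint g K)
    {K : Fin k → Fin l → ℕ} (hK : K ∈ Ks) :
    colorConstraintCost m p g c Ks ≤ colorCost m p g c K :=
  csInf_le (cCC_set_finite Ks hall).bddBelow ⟨K, hK, rfl⟩

lemma cCC_attained {Ks : Set (Fin k → Fin l → ℕ)} (hne : Ks.Nonempty)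
    (hall : ∀ K ∈ Ks, IsColorConstraint g K) :
    ∃ K ∈ Ks, colorConstraintCost m p g c Ks = colorCost m p g c K := by
  have h : sInf {x | ∃ K ∈ Ks, x = colorCost m p g c K} ∈
      {x | ∃ K ∈ Ks, x = colorCost m p g c K} := by
    obtain ⟨K, hK⟩ := hne
    exact Set.Nonempty.csInf_mem ⟨_, K, hK, rfl⟩ (cCC_set_finite Ks hall)
  exact h

lemma cCC_nonneg {Ks : Set (Fin k → Fin l → ℕ)} (hne : Ks.Nonempty)
    (hall : ∀ K ∈ Ks, IsColorConstraint g K) :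
    0 ≤ colorConstraintCost m p g c Ks := by
  obtain ⟨K, hK, h⟩ := cCC_attained (p := p) (c := c) (m := m) hne hall
  rw [h]
  exact colorCost_nonneg' (hall K hK)

lemma cCC_singleton (K : Fin k → Fin l → ℕ) :
    colorConstraintCost m p g c {K} = colorCost m p g c K := by
  have h : {x | ∃ K' ∈ ({K} : Set (Fin k → Fin l → ℕ)), x = colorCost m p g c K'} =
      {colorCost m p g c K} := by
    ext x
    simp [Set.mem_singleton_iff]
  rw [colorConstraintCost, h, csInf_singleton]

end

lemma sat_split {n₁ n₂ k l : ℕ} {g₁ : Fin n₁ → Fin l} {g₂ : Fin n₂ → Fin l}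
    {K : Fin k → Fin l → ℕ} {α : Fin (n₁+n₂) → Fin k}
    (hα : satisfiesColor α (Fin.append g₁ g₂) K) :
    ∃ K₁ K₂ : Fin k → Fin l → ℕ,
      IsColorConstraint g₁ K₁ ∧ IsColorConstraint g₂ K₂ ∧
      satisfiesColor (fun t => α (Fin.castAdd n₂ t)) g₁ K₁ ∧
      satisfiesColor (fun t => α (Fin.natAdd n₁ t)) g₂ K₂ ∧
      ∀ i j, K i j = K₁ i j + K₂ i j := by
  refine ⟨fun i j => (univ.filter fun t : Fin n₁ => α (Fin.castAdd n₂ t) = i ∧ g₁ t = j).card,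
          fun i j => (univ.filter fun t : Fin n₂ => α (Fin.natAdd n₁ t) = i ∧ g₂ t = j).card,
          fun j => partition_card' (fun t => α (Fin.castAdd n₂ t)) (fun t => g₁ t = j),
          fun j => partition_card' (fun t => α (Fin.natAdd n₁ t)) (fun t => g₂ t = j),
          fun i j => rfl, fun i j => rfl, fun i j => ?_⟩
  rw [← hα i j, card_filter_append' (fun t => α t = i ∧ Fin.append g₁ g₂ t = j)]
  simp [Fin.append_left, Fin.append_right]

lemma sat_merge {n₁ n₂ k l : ℕ} {g₁ : Fin n₁ → Fin l} {g₂ : Fin n₂ → Fin l}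
    {K₁ K₂ : Fin k → Fin l → ℕ} {α₁ : Fin n₁ → Fin k} {α₂ : Fin n₂ → Fin k}
    (h1 : satisfiesColor α₁ g₁ K₁) (h2 : satisfiesColor α₂ g₂ K₂)
    {K : Fin k → Fin l → ℕ} (hK : ∀ i j, K i j = K₁ i j + K₂ i j) :
    satisfiesColor (Fin.append α₁ α₂) (Fin.append g₁ g₂) K := by
  intro i j
  rw [card_filter_append' (fun t => Fin.append α₁ α₂ t = i ∧ Fin.append g₁ g₂ t = j), hK]
  simp only [Fin.append_left, Fin.append_right]
  have e1 : (univ.filter fun t : Fin n₁ => α₁ t = i ∧ g₁ t = j).card = K₁ i j := h1 i j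
  have e2 : (univ.filter fun t : Fin n₂ => α₂ t = i ∧ g₂ t = j).card = K₂ i j := h2 i j
  omega

lemma cost_append {X : Type*} [MetricSpace X] {n₁ n₂ k : ℕ} (m : ℕ)
    (p₁ : Fin n₁ → X) (p₂ : Fin n₂ → X) (c : Fin k → X) (α : Fin (n₁+n₂) → Fin k) :
    ∑ t, dist (Fin.append p₁ p₂ t) (c (α t)) ^ m =
      (∑ t, dist (p₁ t) (c (α (Fin.castAdd n₂ t))) ^ m) +
      ∑ t, dist (p₂ t) (c (α (Fin.natAdd n₁ t))) ^ m := by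
  rw [Fin.sum_univ_add]
  simp [Fin.append_left, Fin.append_right]

theorem color_coresets_mergeable {X : Type*} [MetricSpace X] {n₁ n₂ k l m : ℕ}
    (hm : 1 ≤ m) (hk : 1 ≤ k) (hl : 1 ≤ l) {ε : ℝ} (hε : 0 ≤ ε)
    (p₁ q₁ : Fin n₁ → X) (g₁ : Fin n₁ → Fin l)
    (p₂ q₂ : Fin n₂ → X) (g₂ : Fin n₂ → Fin l)
    (h₁ : ∀ c : Fin k → X, ∀ Ks : Set (Fin k → Fin l → ℕ), Ks.Nonempty →
      (∀ K ∈ Ks, IsColorConstraint g₁ K) →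
      |colorConstraintCost m p₁ g₁ c Ks - colorConstraintCost m q₁ g₁ c Ks| ≤
        ε * colorConstraintCost m p₁ g₁ c Ks)
    (h₂ : ∀ c : Fin k → X, ∀ Ks : Set (Fin k → Fin l → ℕ), Ks.Nonempty →
      (∀ K ∈ Ks, IsColorConstraint g₂ K) →
      |colorConstraintCost m p₂ g₂ c Ks - colorConstraintCost m q₂ g₂ c Ks| ≤
        ε * colorConstraintCost m p₂ g₂ c Ks) :
    ∀ c : Fin k → X, ∀ Ks : Set (Fin k → Fin l → ℕ), Ks.Nonempty →
      (∀ K ∈ Ks, IsColorConstraint (Fin.append g₁ g₂) K) →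
      |colorConstraintCost m (Fin.append p₁ p₂) (Fin.append g₁ g₂) c Ks -
          colorConstraintCost m (Fin.append q₁ q₂) (Fin.append g₁ g₂) c Ks| ≤
        ε * colorConstraintCost m (Fin.append p₁ p₂) (Fin.append g₁ g₂) c Ks := by
  intro c Ks hne hall
  have hcp0 : 0 ≤ colorConstraintCost m (Fin.append p₁ p₂) (Fin.append g₁ g₂) c Ks :=
    cCC_nonneg hne hall
  have hcq0 : 0 ≤ colorConstraintCost m (Fin.append q₁ q₂) (Fin.append g₁ g₂) c Ks :=
    cCC_nonneg hne hall
  rw [abs_sub_le_iff]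
  constructor
  · -- lower bound : cp - cq ≤ ε * cp
    obtain ⟨K, hKmem, hqK⟩ := cCC_attained (p := Fin.append q₁ q₂) (c := c) (m := m) hne hall
    obtain ⟨α, hα, hqcost⟩ :=
      colorCost_attained (p := Fin.append q₁ q₂) (c := c) (m := m) (hall K hKmem)
    obtain ⟨K₁, K₂, hc1, hc2, hs1, hs2, hsum⟩ := sat_split hα
    have hq1 : colorCost m q₁ g₁ c K₁ ≤ ∑ t, dist (q₁ t) (c (α (Fin.castAdd n₂ t))) ^ m :=
      colorCost_le hs1
    have hq2 : colorCost m q₂ g₂ c K₂ ≤ ∑ t, dist (q₂ t) (c (α (Fin.natAdd n₁ t))) ^ m :=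
      colorCost_le hs2
    have hqsplit := cost_append m q₁ q₂ c α
    obtain ⟨γ₁, hγ₁, hp1⟩ := colorCost_attained (p := p₁) (c := c) (m := m) hc1
    obtain ⟨γ₂, hγ₂, hp2⟩ := colorCost_attained (p := p₂) (c := c) (m := m) hc2
    have hmerge := sat_merge hγ₁ hγ₂ hsum
    have hple : colorConstraintCost m (Fin.append p₁ p₂) (Fin.append g₁ g₂) c Ks ≤
        colorCost m (Fin.append p₁ p₂) (Fin.append g₁ g₂) c K := cCC_le hall hKmem
    have hple2 : colorCost m (Fin.append p₁ p₂) (Fin.append g₁ g₂) c K ≤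
        ∑ t, dist (Fin.append p₁ p₂ t) (c (Fin.append γ₁ γ₂ t)) ^ m :=
      colorCost_le (p := Fin.append p₁ p₂) (c := c) (m := m) hmerge
    have hpsplit := cost_append m p₁ p₂ c (Fin.append γ₁ γ₂)
    simp only [Fin.append_left, Fin.append_right] at hpsplit
    have e1 := h₁ c {K₁} (Set.singleton_nonempty K₁)
      (by intro K' hK'; rw [Set.mem_singleton_iff] at hK'; subst hK'; exact hc1)
    have e2 := h₂ c {K₂} (Set.singleton_nonempty K₂)
      (by intro K' hK'; rw [Set.mem_singleton_iff] at hK'; subst hK'; exact hc2)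
    rw [cCC_singleton, cCC_singleton] at e1 e2
    have e1' := abs_le.mp e1
    have e2' := abs_le.mp e2
    have hcp1 : 0 ≤ colorCost m p₁ g₁ c K₁ := colorCost_nonneg' hc1
    have hcp2 : 0 ≤ colorCost m p₂ g₂ c K₂ := colorCost_nonneg' hc2
    have hqlow : colorCost m q₁ g₁ c K₁ + colorCost m q₂ g₂ c K₂ ≤
        colorConstraintCost m (Fin.append q₁ q₂) (Fin.append g₁ g₂) c Ks := by
      rw [hqK, hqcost]
      linarith [hqsplit]
    have hpup : colorConstraintCost m (Fin.append p₁ p₂) (Fin.append g₁ g₂) c Ks ≤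
        colorCost m p₁ g₁ c K₁ + colorCost m p₂ g₂ c K₂ := by
      rw [hp1, hp2]
      linarith [hpsplit]
    by_cases hε1 : ε ≤ 1
    · have hmul : (1 - ε) * colorConstraintCost m (Fin.append p₁ p₂) (Fin.append g₁ g₂) c Ks ≤
          (1 - ε) * (colorCost m p₁ g₁ c K₁ + colorCost m p₂ g₂ c K₂) :=
        mul_le_mul_of_nonneg_left hpup (by linarith)
      nlinarith [e1'.1, e1'.2, e2'.1, e2'.2]
    · have hmul : 0 ≤ (ε - 1) * colorConstraintCost m (Fin.append p₁ p₂) (Fin.append g₁ g₂) c Ks :=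
        mul_nonneg (by linarith) hcp0
      nlinarith
  · -- upper bound : cq - cp ≤ ε * cp
    obtain ⟨K, hKmem, hpK⟩ := cCC_attained (p := Fin.append p₁ p₂) (c := c) (m := m) hne hall
    obtain ⟨α, hα, hpcost⟩ :=
      colorCost_attained (p := Fin.append p₁ p₂) (c := c) (m := m) (hall K hKmem)
    obtain ⟨K₁, K₂, hc1, hc2, hs1, hs2, hsum⟩ := sat_split hα
    have hp1 : colorCost m p₁ g₁ c K₁ ≤ ∑ t, dist (p₁ t) (c (α (Fin.castAdd n₂ t))) ^ m :=
      colorCost_le hs1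
    have hp2 : colorCost m p₂ g₂ c K₂ ≤ ∑ t, dist (p₂ t) (c (α (Fin.natAdd n₁ t))) ^ m :=
      colorCost_le hs2
    have hpsplit := cost_append m p₁ p₂ c α
    obtain ⟨β₁, hβ₁, hq1⟩ := colorCost_attained (p := q₁) (c := c) (m := m) hc1
    obtain ⟨β₂, hβ₂, hq2⟩ := colorCost_attained (p := q₂) (c := c) (m := m) hc2
    have hmerge := sat_merge hβ₁ hβ₂ hsum
    have hqle : colorConstraintCost m (Fin.append q₁ q₂) (Fin.append g₁ g₂) c Ks ≤
        colorCost m (Fin.append q₁ q₂) (Fin.append g₁ g₂) c K := cCC_le hall hKmem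
    have hqle2 : colorCost m (Fin.append q₁ q₂) (Fin.append g₁ g₂) c K ≤
        ∑ t, dist (Fin.append q₁ q₂ t) (c (Fin.append β₁ β₂ t)) ^ m :=
      colorCost_le (p := Fin.append q₁ q₂) (c := c) (m := m) hmerge
    have hqsplit := cost_append m q₁ q₂ c (Fin.append β₁ β₂)
    simp only [Fin.append_left, Fin.append_right] at hqsplit
    have e1 := h₁ c {K₁} (Set.singleton_nonempty K₁)
      (by intro K' hK'; rw [Set.mem_singleton_iff] at hK'; subst hK'; exact hc1)
    have e2 := h₂ c {K₂} (Set.singleton_nonempty K₂)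
      (by intro K' hK'; rw [Set.mem_singleton_iff] at hK'; subst hK'; exact hc2)
    rw [cCC_singleton, cCC_singleton] at e1 e2
    have e1' := abs_le.mp e1
    have e2' := abs_le.mp e2
    have hcp1 : 0 ≤ colorCost m p₁ g₁ c K₁ := colorCost_nonneg' hc1
    have hcp2 : 0 ≤ colorCost m p₂ g₂ c K₂ := colorCost_nonneg' hc2
    have hplow : colorCost m p₁ g₁ c K₁ + colorCost m p₂ g₂ c K₂ ≤
        colorConstraintCost m (Fin.append p₁ p₂) (Fin.append g₁ g₂) c Ks := by
      rw [hpK, hpcost]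
      linarith [hpsplit]
    have hqup : colorConstraintCost m (Fin.append q₁ q₂) (Fin.append g₁ g₂) c Ks ≤
        colorCost m q₁ g₁ c K₁ + colorCost m q₂ g₂ c K₂ := by
      rw [hq1, hq2]
      linarith [hqsplit]
    have hmul : ε * (colorCost m p₁ g₁ c K₁ + colorCost m p₂ g₂ c K₂) ≤
        ε * colorConstraintCost m (Fin.append p₁ p₂) (Fin.append g₁ g₂) c Ks :=
      mul_le_mul_of_nonneg_left hplow hε
    nlinarith [e1'.1, e1'.2, e2'.1, e2'.2]
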